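/- Let a 2-CS-PIP instance be given and let x be a fractional solution with x_{e₀} = 1 for some edge e₀ ∈ E. Let x̄ : E → ℝ agree with x on E ∖ {e₀} and satisfy x̄_{e₀} = 0. If x̄/3 lies in the convex hull of the indicator vectors of integral solutions, then x/3 also lies in the convex hull of the indicator vectors of integral solutions. -/

import Mathlib

open Finset

/-- **Packing a 1-edge for 2-CS-PIP.** If `x` is a fractional solution with
`x_{e₀} = 1` and `x̄` (which zeroes out `e₀`) satisfies `x̄/3 ∈ conv(integral
solutions)`, then also `x/3 ∈ conv(integral solutions)`. -/
theorem twoCSPIP_pack_one_edge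
    {V : Type*} [Fintype V] [DecidableEq V]
    (G : SimpleGraph V) [DecidableRel G.Adj]
    (d : Sym2 V → V → ℤ) (b : V → ℤ)
    (hd : ∀ e ∈ G.edgeFinset, ∀ u ∈ e, 1 ≤ d e u)
    (hb : ∀ u : V, 1 ≤ b u)
    (hnoclip : ∀ e ∈ G.edgeFinset, ∀ u ∈ e, d e u ≤ b u)
    (x : {e : Sym2 V // e ∈ G.edgeFinset} → ℝ)
    (hx0 : ∀ e, 0 ≤ x e) (hx1 : ∀ e, x e ≤ 1)
    (hxcap : ∀ u : V,
      ∑ e : {e : Sym2 V // e ∈ G.edgeFinset},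
        (if u ∈ e.1 then (d e.1 u : ℝ) * x e else 0) ≤ (b u : ℝ))
    (e₀ : {e : Sym2 V // e ∈ G.edgeFinset}) (he₀ : x e₀ = 1)
    (xbar : {e : Sym2 V // e ∈ G.edgeFinset} → ℝ)
    (hxbar : ∀ e, e ≠ e₀ → xbar e = x e) (hxbar0 : xbar e₀ = 0)
    (hhull : (fun e => xbar e / 3) ∈
      convexHull ℝ {χ : {e : Sym2 V // e ∈ G.edgeFinset} → ℝ |
        ∃ M : Finset (Sym2 V), M ⊆ G.edgeFinset ∧
          (∀ u : V, ∑ e ∈ M.filter (fun e => u ∈ e), d e u ≤ b u) ∧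
          χ = fun e => if e.1 ∈ M then 1 else 0}) :
    (fun e => x e / 3) ∈
      convexHull ℝ {χ : {e : Sym2 V // e ∈ G.edgeFinset} → ℝ |
        ∃ M : Finset (Sym2 V), M ⊆ G.edgeFinset ∧
          (∀ u : V, ∑ e ∈ M.filter (fun e => u ∈ e), d e u ≤ b u) ∧
          χ = fun e => if e.1 ∈ M then 1 else 0} := by
  classical
  obtain ⟨⟨u, v⟩, huv'⟩ := Quot.exists_rep e₀.1
  have huv : s(u, v) = e₀.1 := huv'
  have hu : u ∈ e₀.1 := by rw [← huv]; exact Sym2.mem_mk_left u v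
  have hv : v ∈ e₀.1 := by rw [← huv]; exact Sym2.mem_mk_right u v
  rw [_root_.convexHull_eq] at hhull ⊢
  obtain ⟨ι, t, lam, z, hlam0, hlam1, hzS, hcm⟩ := hhull
  choose! M hMsub hMcap hMeq using hzS
  -- per-coordinate identity
  have hsum : ∀ e, ∑ i ∈ t, lam i * z i e = xbar e / 3 := by
    intro e
    rw [Finset.centerMass_eq_of_sum_1 _ _ hlam1] at hcm
    have := congrFun hcm e
    simpa [Finset.sum_apply] using this
  -- loads
  set load : ι → V → ℤ := fun i w => ∑ e ∈ (M i).filter (fun e => w ∈ e), d e w with hload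
  have hload0 : ∀ i ∈ t, ∀ w : V, 0 ≤ load i w := by
    intro i hi w
    refine Finset.sum_nonneg fun e he => ?_
    rw [Finset.mem_filter] at he
    exact le_trans zero_le_one (hd e (hMsub i hi he.1) w he.2)
  have hloadsum : ∀ w : V, ∀ i ∈ t,
      (load i w : ℝ) = ∑ e : {e : Sym2 V // e ∈ G.edgeFinset},
        (if w ∈ e.1 then (d e.1 w : ℝ) else 0) * z i e := by
    intro w i hi
    have h1 : ∀ e : {e : Sym2 V // e ∈ G.edgeFinset},
        (if w ∈ e.1 then (d e.1 w : ℝ) else 0) * z i e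
        = (if w ∈ e.1 ∧ e.1 ∈ M i then (d e.1 w : ℝ) else 0) := by
      intro e
      rw [hMeq i hi]
      by_cases h : w ∈ e.1 <;> by_cases h2 : e.1 ∈ M i <;> simp [h, h2]
    rw [Finset.sum_congr rfl fun e _ => h1 e]
    rw [← Finset.sum_subtype G.edgeFinset (fun e => Iff.rfl)
      (fun e => if w ∈ e ∧ e ∈ M i then (d e w : ℝ) else 0)]
    rw [Finset.sum_ite, Finset.sum_const_zero, add_zero]
    have hset : G.edgeFinset.filter (fun e => w ∈ e ∧ e ∈ M i)
        = (M i).filter (fun e => w ∈ e) := by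
      ext e
      simp only [Finset.mem_filter]
      constructor
      · rintro ⟨_, h2, h3⟩; exact ⟨h3, h2⟩
      · rintro ⟨h2, h3⟩; exact ⟨hMsub i hi h2, h3, h2⟩
    rw [hset, hload]
    push_cast
    rfl
  -- average load bound
  have hLavg : ∀ w : V, ∑ i ∈ t, lam i * (load i w : ℝ)
      = (∑ e : {e : Sym2 V // e ∈ G.edgeFinset},
          (if w ∈ e.1 then (d e.1 w : ℝ) * xbar e else 0)) / 3 := by
    intro w
    calc ∑ i ∈ t, lam i * (load i w : ℝ)
        = ∑ i ∈ t, ∑ e : {e : Sym2 V // e ∈ G.edgeFinset},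
            (if w ∈ e.1 then (d e.1 w : ℝ) else 0) * (lam i * z i e) := by
          refine Finset.sum_congr rfl fun i hi => ?_
          rw [hloadsum w i hi, Finset.mul_sum]
          refine Finset.sum_congr rfl fun e _ => by ring
      _ = ∑ e : {e : Sym2 V // e ∈ G.edgeFinset},
            (if w ∈ e.1 then (d e.1 w : ℝ) else 0) * ∑ i ∈ t, lam i * z i e := by
          rw [Finset.sum_comm]
          exact Finset.sum_congr rfl fun e _ => (Finset.mul_sum _ _ _).symm
      _ = ∑ e : {e : Sym2 V // e ∈ G.edgeFinset},
            (if w ∈ e.1 then (d e.1 w : ℝ) * xbar e else 0) / 3 := by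
          refine Finset.sum_congr rfl fun e _ => ?_
          rw [hsum e]
          by_cases h : w ∈ e.1 <;> simp [h] <;> ring
      _ = _ := by rw [Finset.sum_div]
  -- capacity for xbar at endpoints of e₀
  have hcapbar : ∀ w : V, w ∈ e₀.1 →
      ∑ e : {e : Sym2 V // e ∈ G.edgeFinset},
        (if w ∈ e.1 then (d e.1 w : ℝ) * xbar e else 0)
      ≤ (b w : ℝ) - (d e₀.1 w : ℝ) := by
    intro w hw
    have hx := hxcap w
    have hsplit : ∀ y : {e : Sym2 V // e ∈ G.edgeFinset} → ℝ,
        ∑ e : {e : Sym2 V // e ∈ G.edgeFinset},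
          (if w ∈ e.1 then (d e.1 w : ℝ) * y e else 0)
        = (if w ∈ e₀.1 then (d e₀.1 w : ℝ) * y e₀ else 0)
          + ∑ e ∈ Finset.univ.erase e₀,
            (if w ∈ e.1 then (d e.1 w : ℝ) * y e else 0) := by
      intro y
      exact (Finset.add_sum_erase _ _ (Finset.mem_univ e₀)).symm
    rw [hsplit xbar, if_pos hw, hxbar0, mul_zero, zero_add]
    rw [hsplit x, if_pos hw, he₀, mul_one] at hx
    have heq : ∑ e ∈ Finset.univ.erase e₀,
        (if w ∈ e.1 then (d e.1 w : ℝ) * xbar e else 0)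
        = ∑ e ∈ Finset.univ.erase e₀,
        (if w ∈ e.1 then (d e.1 w : ℝ) * x e else 0) := by
      refine Finset.sum_congr rfl fun e he => ?_
      rw [hxbar e (Finset.ne_of_mem_erase he)]
    rw [heq]
    linarith
  -- Markov bound
  have hMarkov : ∀ w : V, w ∈ e₀.1 →
      ∑ i ∈ t.filter (fun i => b w - d e₀.1 w < load i w), lam i < 1/3 := by
    intro w hw
    set B : ℝ := (b w : ℝ) - (d e₀.1 w : ℝ) with hB
    have hB0 : 0 ≤ B := by
      have h := hnoclip e₀.1 e₀.2 w hw
      have h' : (d e₀.1 w : ℝ) ≤ (b w : ℝ) := by exact_mod_cast h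
      simp only [hB]
      linarith
    set s := ∑ i ∈ t.filter (fun i => b w - d e₀.1 w < load i w), lam i with hs
    have hs0 : 0 ≤ s :=
      Finset.sum_nonneg fun i hi => hlam0 i (Finset.mem_filter.mp hi).1
    have h1 : (B + 1) * s ≤ ∑ i ∈ t, lam i * (load i w : ℝ) := by
      calc (B + 1) * s = ∑ i ∈ t.filter (fun i => b w - d e₀.1 w < load i w),
            lam i * (B + 1) := by rw [hs, Finset.mul_sum]; exact Finset.sum_congr rfl fun i _ => mul_comm _ _
        _ ≤ ∑ i ∈ t.filter (fun i => b w - d e₀.1 w < load i w),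
            lam i * (load i w : ℝ) := by
            refine Finset.sum_le_sum fun i hi => ?_
            obtain ⟨hit, hbad⟩ := Finset.mem_filter.mp hi
            refine mul_le_mul_of_nonneg_left ?_ (hlam0 i hit)
            have h' : b w - d e₀.1 w + 1 ≤ load i w := hbad
            have h'' : ((b w - d e₀.1 w + 1 : ℤ) : ℝ) ≤ ((load i w : ℤ) : ℝ) := by
              exact_mod_cast h'
            push_cast at h''
            simp only [hB]
            linarith
        _ ≤ ∑ i ∈ t, lam i * (load i w : ℝ) := by
            refine Finset.sum_le_sum_of_subset_of_nonneg (Finset.filter_subset _ _)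
              fun i hi _ => ?_
            refine mul_nonneg (hlam0 i hi) ?_
            exact_mod_cast hload0 i hi w
    have h2 : ∑ i ∈ t, lam i * (load i w : ℝ) ≤ B / 3 := by
      rw [hLavg w]
      have := hcapbar w hw
      linarith
    nlinarith
  -- the good set
  set Good : Finset ι := t.filter
    (fun i => load i u ≤ b u - d e₀.1 u ∧ load i v ≤ b v - d e₀.1 v) with hGood
  set wG : ℝ := ∑ i ∈ Good, lam i with hwG
  have hwGle : 1/3 ≤ wG := by
    have hpart : wG + ∑ i ∈ t.filter
        (fun i => ¬(load i u ≤ b u - d e₀.1 u ∧ load i v ≤ b v - d e₀.1 v)), lam i = 1 := by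
      rw [hwG, hGood, Finset.sum_filter_add_sum_filter_not]
      exact hlam1
    have hsub : ∑ i ∈ t.filter
        (fun i => ¬(load i u ≤ b u - d e₀.1 u ∧ load i v ≤ b v - d e₀.1 v)), lam i
        ≤ ∑ i ∈ t.filter (fun i => b u - d e₀.1 u < load i u), lam i
          + ∑ i ∈ t.filter (fun i => b v - d e₀.1 v < load i v), lam i := by
      have hun : t.filter (fun i => ¬(load i u ≤ b u - d e₀.1 u ∧ load i v ≤ b v - d e₀.1 v))
          = t.filter (fun i => b u - d e₀.1 u < load i u)
            ∪ t.filter (fun i => b v - d e₀.1 v < load i v) := by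
        rw [← Finset.filter_or]
        refine Finset.filter_congr fun i _ => ?_
        constructor
        · intro h
          by_contra hc
          push_neg at hc
          exact h hc
        · rintro (h | h) ⟨h1, h2⟩
          · exact absurd h1 (not_le.mpr h)
          · exact absurd h2 (not_le.mpr h)
      rw [hun]
      have := Finset.sum_union_inter (s₁ := t.filter (fun i => b u - d e₀.1 u < load i u))
        (s₂ := t.filter (fun i => b v - d e₀.1 v < load i v)) (f := lam)
      have hinter : 0 ≤ ∑ i ∈ t.filter (fun i => b u - d e₀.1 u < load i u)
          ∩ t.filter (fun i => b v - d e₀.1 v < load i v), lam i := by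
        refine Finset.sum_nonneg fun i hi => ?_
        exact hlam0 i (Finset.mem_filter.mp (Finset.mem_inter.mp hi).1).1
      linarith
    have h1 := hMarkov u hu
    have h2 := hMarkov v hv
    linarith
  have hwGpos : 0 < wG := lt_of_lt_of_le (by norm_num) hwGle
  -- good sets avoid e₀ only in the sense used; feasibility of augmented sets
  -- construct the new convex combination
  refine ⟨ι ⊕ ι, t.disjSum t,
    Sum.elim (fun i => if i ∈ Good then lam i / (3 * wG) else 0)
      (fun i => lam i - if i ∈ Good then lam i / (3 * wG) else 0),
    Sum.elim (fun i => fun e => if e.1 ∈ (if i ∈ Good then insert e₀.1 (M i) else ∅) then (1:ℝ) else 0)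
      z, ?_, ?_, ?_, ?_⟩
  · rintro (i | i) hi
    · rw [Finset.inl_mem_disjSum] at hi
      simp only [Sum.elim_inl]
      split_ifs with h
      · exact div_nonneg (hlam0 i hi) (by linarith)
      · exact le_refl 0
    · rw [Finset.inr_mem_disjSum] at hi
      simp only [Sum.elim_inr]
      split_ifs with h
      · have : lam i / (3 * wG) ≤ lam i := div_le_self (hlam0 i hi) (by linarith)
        linarith
      · simpa using hlam0 i hi
  · rw [Finset.sum_disjSum]
    simp only [Sum.elim_inl, Sum.elim_inr]
    rw [Finset.sum_sub_distrib]
    rw [← hlam1]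
    ring
  · rintro (i | i) hi
    · rw [Finset.inl_mem_disjSum] at hi
      simp only [Sum.elim_inl]
      by_cases hg : i ∈ Good
      · refine ⟨insert e₀.1 (M i), Finset.insert_subset e₀.2 (hMsub i hi), ?_, ?_⟩
        · intro w
          by_cases hw : w ∈ e₀.1
          · by_cases hm : e₀.1 ∈ (M i).filter (fun e => w ∈ e)
            · rw [Finset.filter_insert, if_pos hw, Finset.insert_eq_self.mpr hm]
              exact hMcap i hi w
            · rw [Finset.filter_insert, if_pos hw, Finset.sum_insert hm]
              have hw' : w = u ∨ w = v := by
                rw [← huv] at hw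
                exact Sym2.mem_iff.mp hw
              obtain ⟨hgu, hgv⟩ := (Finset.mem_filter.mp hg).2
              rcases hw' with rfl | rfl
              · have : load i w ≤ b w - d e₀.1 w := hgu
                simp only [hload] at this
                omega
              · have : load i w ≤ b w - d e₀.1 w := hgv
                simp only [hload] at this
                omega
          · rw [Finset.filter_insert, if_neg hw]
            exact hMcap i hi w
        · funext e
          simp [hg]
      · exact ⟨∅, Finset.empty_subset _, fun w => by
          simpa using Int.le_of_lt (lt_of_lt_of_le Int.zero_lt_one (hb w)),
          by funext e; simp [hg]⟩
    · rw [Finset.inr_mem_disjSum] at hi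
      exact ⟨M i, hMsub i hi, hMcap i hi, hMeq i hi⟩
  · rw [Finset.centerMass_eq_of_sum_1]
    swap
    · rw [Finset.sum_disjSum]
      simp only [Sum.elim_inl, Sum.elim_inr]
      rw [Finset.sum_sub_distrib, ← hlam1]
      ring
    funext e
    rw [Finset.sum_apply, Finset.sum_disjSum]
    simp only [Sum.elim_inl, Sum.elim_inr, Pi.smul_apply, smul_eq_mul]
    by_cases he : e = e₀
    · subst he
      have hz0 : ∀ i ∈ t, lam i * z i e = 0 := by
        rw [← Finset.sum_eq_zero_iff_of_nonneg]
        · rw [hsum e, hxbar0]; norm_num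
        · intro i hi
          refine mul_nonneg (hlam0 i hi) ?_
          rw [hMeq i hi]
          positivity
      have hfirst : ∑ i ∈ t, (if i ∈ Good then lam i / (3 * wG) else 0)
          * (if e.1 ∈ (if i ∈ Good then insert e.1 (M i) else ∅) then (1:ℝ) else 0)
          = 1/3 := by
        calc ∑ i ∈ t, (if i ∈ Good then lam i / (3 * wG) else 0)
            * (if e.1 ∈ (if i ∈ Good then insert e.1 (M i) else ∅) then (1:ℝ) else 0)
            = ∑ i ∈ t, (if i ∈ Good then lam i / (3 * wG) else 0) := by
              refine Finset.sum_congr rfl fun i hi => ?_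
              by_cases hg : i ∈ Good <;> simp [hg]
          _ = ∑ i ∈ Good, lam i / (3 * wG) := by
              rw [Finset.sum_ite_mem, Finset.inter_eq_right.mpr (Finset.filter_subset _ _)]
          _ = wG / (3 * wG) := by rw [← Finset.sum_div, ← hwG]
          _ = 1/3 := by field_simp
      have hsecond : ∑ i ∈ t, (lam i - if i ∈ Good then lam i / (3 * wG) else 0) * z i e = 0 := by
        refine Finset.sum_eq_zero fun i hi => ?_
        by_cases hl : lam i = 0
        · simp [hl]
        · have h0 := hz0 i hi
          have : z i e = 0 := by
            rcases mul_eq_zero.mp h0 with h | h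
            · exact absurd h hl
            · exact h
          rw [this, mul_zero]
      rw [hfirst, hsecond, add_zero, he₀]
    · have hne : e.1 ≠ e₀.1 := fun h => he (Subtype.ext h)
      have hcomb : ∀ i ∈ t,
          (if i ∈ Good then lam i / (3 * wG) else 0)
            * (if e.1 ∈ (if i ∈ Good then insert e₀.1 (M i) else ∅) then (1:ℝ) else 0)
          + (lam i - if i ∈ Good then lam i / (3 * wG) else 0) * z i e
          = lam i * z i e := by
        intro i hi
        by_cases hg : i ∈ Good
        · have hzz : (if e.1 ∈ (if i ∈ Good then insert e₀.1 (M i) else ∅) then (1:ℝ) else 0)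
              = z i e := by
            rw [hMeq i hi, if_pos hg]
            simp [Finset.mem_insert, hne]
          rw [hzz, if_pos hg]
          ring
        · simp [hg]
      rw [← Finset.sum_add_distrib, Finset.sum_congr rfl hcomb, hsum e, hxbar e he]
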